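/- Sarason Fundamental Identity: with T the compressed shift on K_θ, W a contraction on K_θ commuting with T, Ex = ⟨x, e_*⟩, Mx = ⟨Wx, e_*⟩ and D(x,y) = ⟨(I - W*W)x, y⟩, one has D(x,y) - D(Tx,Ty) = ⟨Ex, Ey⟩_ℂ - ⟨Mx, My⟩_ℂ for all x, y ∈ K_θ. -/

import Mathlib

set_option synthInstance.maxHeartbeats 1000000
set_option maxHeartbeats 1000000

open scoped InnerProductSpace

/-- Sarason Fundamental Identity, in the Beurling coordinate-free model of `H²` (`H` Hilbert,
`Sh` a unilateral shift of multiplicity one with cyclic wandering unit vector `e₀`, `Θ` an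
isometry commuting with `Sh`, i.e. multiplication by an inner function `θ`;
`Kθ = (Ran Θ)ᗮ`, `T` the compressed shift on `Kθ`, `e_* = Sh*(Θ e₀) ∈ Kθ` models
`(θ(t) - θ(0))/t`).  For a contraction `W` on `Kθ` commuting with `T`, with
`Ex = ⟨x, e_*⟩`, `Mx = ⟨Wx, e_*⟩` and `D(x,y) = ⟨(I - W*W)x, y⟩`, one has
`D(x,y) - D(Tx,Ty) = ⟨Ex, Ey⟩ - ⟨Mx, My⟩` for all `x, y ∈ Kθ`. -/
theorem sarason_fundamental_identity
    (H : Type*) [NormedAddCommGroup H] [InnerProductSpace ℂ H] [CompleteSpace H]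
    (Sh : H →L[ℂ] H) (hSh : ∀ x : H, ‖Sh x‖ = ‖x‖)
    (e₀ : H) (he₀ : ‖e₀‖ = 1)
    (hwander : (LinearMap.range (Sh : H →ₗ[ℂ] H))ᗮ = Submodule.span ℂ {e₀})
    (hcyclic : (Submodule.span ℂ (Set.range fun n : ℕ => (Sh ^ n) e₀)).topologicalClosure = ⊤)
    (Θ : H →L[ℂ] H) (hΘ : ∀ x : H, ‖Θ x‖ = ‖x‖) (hcomm : Θ ∘L Sh = Sh ∘L Θ)
    (T : ((LinearMap.range (Θ : H →ₗ[ℂ] H))ᗮ : Submodule ℂ H) →L[ℂ] ((LinearMap.range (Θ : H →ₗ[ℂ] H))ᗮ : Submodule ℂ H))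
    (hT : ∀ x : ((LinearMap.range (Θ : H →ₗ[ℂ] H))ᗮ : Submodule ℂ H),
      T x = Submodule.orthogonalProjectionOnto ((LinearMap.range (Θ : H →ₗ[ℂ] H))ᗮ : Submodule ℂ H) (Sh (x : H)))
    (hestar : ContinuousLinearMap.adjoint Sh (Θ e₀) ∈ ((LinearMap.range (Θ : H →ₗ[ℂ] H))ᗮ : Submodule ℂ H))
    (W : ((LinearMap.range (Θ : H →ₗ[ℂ] H))ᗮ : Submodule ℂ H) →L[ℂ] ((LinearMap.range (Θ : H →ₗ[ℂ] H))ᗮ : Submodule ℂ H))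
    (hW : ‖W‖ ≤ 1) (hWT : W ∘L T = T ∘L W) :
    ∀ x y : ((LinearMap.range (Θ : H →ₗ[ℂ] H))ᗮ : Submodule ℂ H),
      letI estar : ((LinearMap.range (Θ : H →ₗ[ℂ] H))ᗮ : Submodule ℂ H) :=
        ⟨ContinuousLinearMap.adjoint Sh (Θ e₀), hestar⟩
      letI D : ((LinearMap.range (Θ : H →ₗ[ℂ] H))ᗮ : Submodule ℂ H) →
          ((LinearMap.range (Θ : H →ₗ[ℂ] H))ᗮ : Submodule ℂ H) → ℂ :=
        fun u v => ⟪v, u - ContinuousLinearMap.adjoint W (W u)⟫_ℂ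
      letI E : ((LinearMap.range (Θ : H →ₗ[ℂ] H))ᗮ : Submodule ℂ H) → ℂ := fun u => ⟪estar, u⟫_ℂ
      letI M : ((LinearMap.range (Θ : H →ₗ[ℂ] H))ᗮ : Submodule ℂ H) → ℂ := fun u => ⟪estar, W u⟫_ℂ
      D x y - D (T x) (T y)
        = E x * (starRingEnd ℂ) (E y) - M x * (starRingEnd ℂ) (M y) := by
  -- inner-product preservation
  have hShi : ∀ a b : H, ⟪Sh a, Sh b⟫_ℂ = ⟪a, b⟫_ℂ :=
    (LinearMap.norm_map_iff_inner_map_map (𝕜 := ℂ) Sh).mp hSh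
  have hΘi : ∀ a b : H, ⟪Θ a, Θ b⟫_ℂ = ⟪a, b⟫_ℂ :=
    (LinearMap.norm_map_iff_inner_map_map (𝕜 := ℂ) Θ).mp hΘ
  have he₀1 : ⟪e₀, e₀⟫_ℂ = 1 := by
    rw [inner_self_eq_norm_sq_to_K, he₀]; norm_num
  -- e₀ is orthogonal to the range of Sh
  have he₀w : ∀ u : H, ⟪Sh u, e₀⟫_ℂ = 0 := by
    intro u
    have h1 : e₀ ∈ (LinearMap.range (Sh : H →ₗ[ℂ] H))ᗮ := by
      rw [hwander]; exact Submodule.mem_span_singleton_self e₀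
    exact h1 _ ⟨u, rfl⟩
  -- commutation for powers
  have hcommz : ∀ z : H, Θ (Sh z) = Sh (Θ z) := fun z =>
    congrFun (congrArg DFunLike.coe hcomm) z
  have hcomm' : ∀ (n : ℕ) (z : H), Θ ((Sh ^ n) z) = (Sh ^ n) (Θ z) := by
    intro n
    induction n with
    | zero => intro z; simp
    | succ n ih =>
      intro z
      have h1 : (Sh ^ (n + 1)) z = Sh ((Sh ^ n) z) := by
        rw [pow_succ']; rfl
      have h2 : (Sh ^ (n + 1)) (Θ z) = Sh ((Sh ^ n) (Θ z)) := by
        rw [pow_succ']; rfl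
      rw [h1, hcommz, ih z, h2]
  -- x ∈ K is orthogonal to range of Θ
  have hKorth : ∀ (x : ((LinearMap.range (Θ : H →ₗ[ℂ] H))ᗮ : Submodule ℂ H)) (z : H),
      ⟪Θ z, (x : H)⟫_ℂ = 0 := fun x z => x.2 _ ⟨z, rfl⟩
  -- Θ* (Sh x) = ⟪Θ e₀, Sh x⟫ • e₀ for x ∈ K
  have hadjΘ : ∀ x : ((LinearMap.range (Θ : H →ₗ[ℂ] H))ᗮ : Submodule ℂ H),
      ContinuousLinearMap.adjoint Θ (Sh (x : H)) = ⟪Θ e₀, Sh (x : H)⟫_ℂ • e₀ := by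
    intro x
    set c : ℂ := ⟪Θ e₀, Sh (x : H)⟫_ℂ with hc
    set v : H := ContinuousLinearMap.adjoint Θ (Sh (x : H)) - c • e₀ with hv
    set S : Submodule ℂ H := Submodule.span ℂ (Set.range fun n : ℕ => (Sh ^ n) e₀) with hS
    have hSbot : Sᗮ = ⊥ := (Submodule.topologicalClosure_eq_top_iff).mp hcyclic
    have hvS : v ∈ Sᗮ := by
      rw [Submodule.mem_orthogonal]
      intro u hu
      induction hu using Submodule.span_induction with
      | mem u hu =>
        obtain ⟨n, rfl⟩ := hu
        show ⟪(Sh ^ n) e₀, v⟫_ℂ = 0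
        cases n with
        | zero =>
          simp only [pow_zero, ContinuousLinearMap.one_apply, hv]
          rw [inner_sub_right, ContinuousLinearMap.adjoint_inner_right,
            inner_smul_right, he₀1]
          ring
        | succ n =>
          have h1 : ((Sh ^ (n + 1)) e₀ : H) = Sh ((Sh ^ n) e₀) := by
            rw [pow_succ']; rfl
          rw [hv, inner_sub_right, ContinuousLinearMap.adjoint_inner_right, h1, hcommz,
            hShi, inner_smul_right, hKorth x _, he₀w]
          ring
      | zero => simp
      | add u w _ _ hu hw => rw [inner_add_left, hu, hw]; ring
      | smul a u _ hu => rw [inner_smul_left, hu]; ring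
    rw [hSbot, Submodule.mem_bot] at hvS
    exact sub_eq_zero.mp hvS
  -- explicit formula for T at the level of H
  have hTform : ∀ x : ((LinearMap.range (Θ : H →ₗ[ℂ] H))ᗮ : Submodule ℂ H),
      ((T x : ((LinearMap.range (Θ : H →ₗ[ℂ] H))ᗮ : Submodule ℂ H)) : H)
        = Sh (x : H) - ⟪Θ e₀, Sh (x : H)⟫_ℂ • Θ e₀ := by
    intro x
    rw [hT, Submodule.coe_orthogonalProjectionOnto_apply]
    apply Submodule.eq_starProjection_of_mem_orthogonal'
      (v := Sh (x : H) - ⟪Θ e₀, Sh (x : H)⟫_ℂ • Θ e₀)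
      (z := ⟪Θ e₀, Sh (x : H)⟫_ℂ • Θ e₀)
    · -- membership in K
      rw [Submodule.mem_orthogonal]
      rintro u ⟨z, rfl⟩
      change ⟪Θ z, Sh (x : H) - ⟪Θ e₀, Sh (x : H)⟫_ℂ • Θ e₀⟫_ℂ = 0
      rw [inner_sub_right, inner_smul_right]
      have h1 : ⟪Θ z, Sh (x : H)⟫_ℂ = ⟪z, ContinuousLinearMap.adjoint Θ (Sh (x : H))⟫_ℂ := by
        rw [ContinuousLinearMap.adjoint_inner_right]
      rw [h1, hadjΘ x, inner_smul_right, hΘi]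
      ring
    · -- the complement part lies in Kᗮ
      have h1 : ⟪Θ e₀, Sh (x : H)⟫_ℂ • Θ e₀ ∈ LinearMap.range (Θ : H →ₗ[ℂ] H) := by
        refine ⟨⟪Θ e₀, Sh (x : H)⟫_ℂ • e₀, ?_⟩
        simp
      exact (Submodule.le_orthogonal_orthogonal _) h1
    · abel
  -- the key inner product identity for T (defect identity)
  have hkey : ∀ a b : ((LinearMap.range (Θ : H →ₗ[ℂ] H))ᗮ : Submodule ℂ H),
      ⟪T a, T b⟫_ℂ = ⟪a, b⟫_ℂ
      - (starRingEnd ℂ) ⟪ContinuousLinearMap.adjoint Sh (Θ e₀), (a : H)⟫_ℂ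
        * ⟪ContinuousLinearMap.adjoint Sh (Θ e₀), (b : H)⟫_ℂ := by
    intro a b
    have hEa : ⟪ContinuousLinearMap.adjoint Sh (Θ e₀), (a : H)⟫_ℂ = ⟪Θ e₀, Sh (a : H)⟫_ℂ :=
      ContinuousLinearMap.adjoint_inner_left _ _ _
    have hEb : ⟪ContinuousLinearMap.adjoint Sh (Θ e₀), (b : H)⟫_ℂ = ⟪Θ e₀, Sh (b : H)⟫_ℂ :=
      ContinuousLinearMap.adjoint_inner_left _ _ _
    rw [hEa, hEb, Submodule.coe_inner, Submodule.coe_inner, hTform a, hTform b]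
    rw [inner_sub_left, inner_sub_right, inner_sub_right]
    rw [inner_smul_right, inner_smul_left, inner_smul_left, inner_smul_right,
      hShi, hΘi, he₀1]
    have h1 : ⟪Sh (a : H), Θ e₀⟫_ℂ = (starRingEnd ℂ) ⟪Θ e₀, Sh (a : H)⟫_ℂ :=
      (inner_conj_symm _ _).symm
    rw [h1]
    ring
  -- final algebra
  intro x y
  dsimp only
  have hWadj : ∀ a b : ((LinearMap.range (Θ : H →ₗ[ℂ] H))ᗮ : Submodule ℂ H),
      ⟪a, ContinuousLinearMap.adjoint W (W b)⟫_ℂ = ⟪W a, W b⟫_ℂ := by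
    intro a b; rw [ContinuousLinearMap.adjoint_inner_right]
  have hWTx : W (T x) = T (W x) := by
    have := congrFun (congrArg DFunLike.coe hWT) x
    simpa using this
  have hWTy : W (T y) = T (W y) := by
    have := congrFun (congrArg DFunLike.coe hWT) y
    simpa using this
  have hE : ∀ a : ((LinearMap.range (Θ : H →ₗ[ℂ] H))ᗮ : Submodule ℂ H),
      (⟪(⟨ContinuousLinearMap.adjoint Sh (Θ e₀), hestar⟩ :
          ((LinearMap.range (Θ : H →ₗ[ℂ] H))ᗮ : Submodule ℂ H)), a⟫_ℂ)
      = ⟪ContinuousLinearMap.adjoint Sh (Θ e₀), (a : H)⟫_ℂ := fun a => rfl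
  rw [inner_sub_right, inner_sub_right, hWadj, hWadj, hWTx, hWTy,
    hkey y x, hkey (W y) (W x), hE, hE, hE, hE]
  ring
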